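/- Let n ≥ 2 and let Ω ⊆ ℝ^n be a nonempty open connected set whose closure is contained in the complement of a non-degenerate solid cone C ⊂ ℝ^n. Then Ω is Dirichlet parabolic: every bounded function u that is continuous on the closure of Ω, twice continuously differentiable on Ω, harmonic in Ω (Δu = 0 on Ω), and vanishes on the frontier of Ω, vanishes identically on Ω. -/

import Mathlib

set_option maxHeartbeats 4000000

open Filter Set


open scoped RealInnerProductSpace

/-- The Euclidean Laplacian `Δu = ∑ i ∂²u/∂xᵢ²`. -/
noncomputable def laplacian {n : ℕ} (u : EuclideanSpace ℝ (Fin n) → ℝ)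
    (x : EuclideanSpace ℝ (Fin n)) : ℝ :=
  ∑ i : Fin n, fderiv ℝ (fun y => fderiv ℝ u y (EuclideanSpace.single i 1)) x
    (EuclideanSpace.single i 1)

variable {n : ℕ}

section phi

variable (q : EuclideanSpace ℝ (Fin n))

noncomputable def rf (q : EuclideanSpace ℝ (Fin n)) : EuclideanSpace ℝ (Fin n) → ℝ :=
  fun y => ⟪y - q, y - q⟫

noncomputable def pf (q : EuclideanSpace ℝ (Fin n)) : EuclideanSpace ℝ (Fin n) → ℝ :=
  fun y => (rf q y) ^ (-(n : ℤ))

lemma rf_eq_norm_sq (y : EuclideanSpace ℝ (Fin n)) : rf q y = ‖y - q‖ ^ 2 :=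
  real_inner_self_eq_norm_sq _

lemma rf_pos {q y : EuclideanSpace ℝ (Fin n)} (hy : y ≠ q) : 0 < rf q y := by
  rw [rf_eq_norm_sq]
  have : 0 < ‖y - q‖ := norm_pos_iff.2 (sub_ne_zero.2 hy)
  positivity

lemma rf_hasFDerivAt (y : EuclideanSpace ℝ (Fin n)) :
    HasFDerivAt (rf q)
      ((fderivInnerCLM ℝ (y - q, y - q)).comp
        ((ContinuousLinearMap.id ℝ _).prod (ContinuousLinearMap.id ℝ _))) y := by
  have h := HasFDerivAt.inner ℝ ((hasFDerivAt_id y).sub_const q) ((hasFDerivAt_id y).sub_const q)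
  exact h

lemma rf_fderiv_apply (y v : EuclideanSpace ℝ (Fin n)) :
    ((fderivInnerCLM ℝ (y - q, y - q)).comp
        ((ContinuousLinearMap.id ℝ _).prod (ContinuousLinearMap.id ℝ _))) v
      = 2 * ⟪y - q, v⟫ := by
  simp only [ContinuousLinearMap.comp_apply, ContinuousLinearMap.prod_apply,
    ContinuousLinearMap.id_apply, fderivInnerCLM_apply]
  rw [real_inner_comm]
  ring

lemma pf_hasFDerivAt {y : EuclideanSpace ℝ (Fin n)} (hy : y ≠ q) :
    HasFDerivAt (pf q)
      ((((-(n:ℤ)) : ℝ) * (rf q y) ^ (-(n:ℤ) - 1)) •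
        ((fderivInnerCLM ℝ (y - q, y - q)).comp
          ((ContinuousLinearMap.id ℝ _).prod (ContinuousLinearMap.id ℝ _)))) y := by
  have hz := hasDerivAt_zpow (-(n:ℤ)) (rf q y) (Or.inl (rf_pos hy).ne')
  have h := hz.comp_hasFDerivAt y (rf_hasFDerivAt q y)
  have hcast : ((↑(-(n:ℤ)) : ℝ)) = ((-(n:ℤ)) : ℝ) := by push_cast; ring
  rw [hcast] at h
  exact h

lemma pf_fderiv_apply {y : EuclideanSpace ℝ (Fin n)} (hy : y ≠ q)
    (v : EuclideanSpace ℝ (Fin n)) :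
    fderiv ℝ (pf q) y v = (-(n:ℝ)) * ((rf q y) ^ (-(n:ℤ) - 1) * (2 * ⟪y - q, v⟫)) := by
  rw [(pf_hasFDerivAt q hy).fderiv]
  rw [ContinuousLinearMap.smul_apply, rf_fderiv_apply, smul_eq_mul]
  push_cast
  ring

lemma pf_differentiableAt {y : EuclideanSpace ℝ (Fin n)} (hy : y ≠ q) :
    DifferentiableAt ℝ (pf q) y := (pf_hasFDerivAt q hy).differentiableAt

end phi

section phi2

variable (q : EuclideanSpace ℝ (Fin n))

lemma pf_fderiv_eventually {x : EuclideanSpace ℝ (Fin n)} (hx : x ≠ q)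
    (v : EuclideanSpace ℝ (Fin n)) :
    (fun y => fderiv ℝ (pf q) y v) =ᶠ[nhds x]
      (fun y => (-(n:ℝ)) * ((rf q y) ^ (-(n:ℤ) - 1) * (2 * ⟪y - q, v⟫))) := by
  filter_upwards [IsOpen.mem_nhds isOpen_ne hx] with y hy
  rw [pf_fderiv_apply q hy v]

lemma pf_second {x : EuclideanSpace ℝ (Fin n)} (hx : x ≠ q)
    (v : EuclideanSpace ℝ (Fin n)) :
    DifferentiableAt ℝ (fun y => fderiv ℝ (pf q) y v) x ∧
    fderiv ℝ (fun y => fderiv ℝ (pf q) y v) x v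
      = (-(n:ℝ)) * ((rf q x) ^ (-(n:ℤ) - 1) * (2 * ⟪v, v⟫))
        + (-(n:ℝ)) * ((2 * ⟪x - q, v⟫) *
            (((-(n:ℝ)) - 1) * (rf q x) ^ (-(n:ℤ) - 2) * (2 * ⟪x - q, v⟫))) := by
  have hA : HasFDerivAt (fun y => (rf q y) ^ (-(n:ℤ) - 1))
      (((((-(n:ℤ) - 1) : ℤ) : ℝ) * (rf q x) ^ (-(n:ℤ) - 2)) •
        ((fderivInnerCLM ℝ (x - q, x - q)).comp
          ((ContinuousLinearMap.id ℝ _).prod (ContinuousLinearMap.id ℝ _)))) x := by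
    have hz := hasDerivAt_zpow (-(n:ℤ) - 1) (rf q x) (Or.inl (rf_pos hx).ne')
    have h := hz.comp_hasFDerivAt x (rf_hasFDerivAt q x)
    have he : (-(n:ℤ) - 1) - 1 = -(n:ℤ) - 2 := by ring
    rw [he] at h
    exact h
  have hB : HasFDerivAt (fun y => (2:ℝ) * ⟪y - q, v⟫)
      ((2:ℝ) • ((fderivInnerCLM ℝ (x - q, v)).comp
        ((ContinuousLinearMap.id ℝ _).prod
          (0 : EuclideanSpace ℝ (Fin n) →L[ℝ] EuclideanSpace ℝ (Fin n))))) x := by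
    have h := HasFDerivAt.inner ℝ ((hasFDerivAt_id x).sub_const q) (hasFDerivAt_const v x)
    exact h.const_mul 2
  have hF := (hA.mul hB).const_mul (-(n:ℝ))
  have heq := pf_fderiv_eventually q hx v
  constructor
  · exact (Filter.EventuallyEq.differentiableAt_iff heq).2 hF.differentiableAt
  · rw [Filter.EventuallyEq.fderiv_eq heq, (show HasFDerivAt (fun y => -(n:ℝ) * ((rf q y) ^ (-(n:ℤ) - 1) * (2 * ⟪y - q, v⟫))) _ x from hF).fderiv]
    simp only [ContinuousLinearMap.smul_apply, ContinuousLinearMap.add_apply,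
      ContinuousLinearMap.comp_apply, ContinuousLinearMap.prod_apply,
      ContinuousLinearMap.id_apply, ContinuousLinearMap.zero_apply,
      fderivInnerCLM_apply, inner_zero_right, smul_eq_mul]
    rw [real_inner_comm (x - q) v]
    push_cast
    ring

end phi2

section lap

variable (q : EuclideanSpace ℝ (Fin n))

lemma single_inner_self (i : Fin n) :
    ⟪(EuclideanSpace.single i (1:ℝ)), EuclideanSpace.single i 1⟫ = (1:ℝ) := by
  simp [EuclideanSpace.inner_single_left]

lemma sum_inner_single_sq (w : EuclideanSpace ℝ (Fin n)) :
    ∑ i : Fin n, ⟪w, EuclideanSpace.single i (1:ℝ)⟫ * ⟪w, EuclideanSpace.single i 1⟫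
      = ⟪w, w⟫ := by
  rw [PiLp.inner_apply]
  refine Finset.sum_congr rfl fun i _ => ?_
  simp [EuclideanSpace.inner_single_right]
  ring

lemma pf_lap_pos (hn : 1 ≤ n) {x : EuclideanSpace ℝ (Fin n)} (hx : x ≠ q) :
    0 < laplacian (pf q) x := by
  have hρ := rf_pos (q := q) hx
  have hcalc : laplacian (pf q) x
      = ∑ i : Fin n, ((-(n:ℝ)) * ((rf q x) ^ (-(n:ℤ) - 1) * 2)
          + ((-(n:ℝ)) * (((-(n:ℝ)) - 1) * (rf q x) ^ (-(n:ℤ) - 2) * 4)) *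
            (⟪x - q, EuclideanSpace.single i (1:ℝ)⟫ * ⟪x - q, EuclideanSpace.single i 1⟫)) := by
    unfold laplacian
    refine Finset.sum_congr rfl fun i _ => ?_
    rw [(pf_second q hx (EuclideanSpace.single i 1)).2, single_inner_self]
    ring
  rw [hcalc, Finset.sum_add_distrib, Finset.sum_const, ← Finset.mul_sum,
    sum_inner_single_sq] at *
  have hinner : ⟪x - q, x - q⟫ = rf q x := rfl
  rw [hinner] at hcalc ⊢
  have hzpow : (rf q x) ^ (-(n:ℤ) - 2) * rf q x = (rf q x) ^ (-(n:ℤ) - 1) := by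
    rw [← zpow_add_one₀ hρ.ne']
    congr 1
    ring
  have hppos : 0 < (rf q x) ^ (-(n:ℤ) - 1) := zpow_pos hρ _
  rw [Finset.card_univ, Fintype.card_fin, nsmul_eq_mul]
  have hE : (n:ℝ) * ((-(n:ℝ)) * ((rf q x) ^ (-(n:ℤ) - 1) * 2))
      + (-(n:ℝ)) * (((-(n:ℝ)) - 1) * (rf q x) ^ (-(n:ℤ) - 2) * 4) * rf q x
      = (2 * (n:ℝ) * (n:ℝ) + 4 * (n:ℝ)) * (rf q x) ^ (-(n:ℤ) - 1) := by
    rw [← hzpow]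
    ring
  rw [hE]
  have hnpos : (0:ℝ) < n := by exact_mod_cast hn
  positivity

end lap

lemma zpow_neg_le' {n : ℕ} {a b : ℝ} (ha : 0 < a) (hab : a ≤ b) :
    b ^ (-(n:ℤ)) ≤ a ^ (-(n:ℤ)) := by
  rw [zpow_neg, zpow_neg, zpow_natCast, zpow_natCast]
  exact inv_anti₀ (pow_pos ha n) (pow_le_pow_left₀ ha.le hab n)

lemma zpow_neg_pos' {n : ℕ} {a : ℝ} (ha : 0 < a) : 0 < a ^ (-(n:ℤ)) := zpow_pos ha _

lemma second_deriv_test (f : EuclideanSpace ℝ (Fin n) → ℝ) (x₀ v : EuclideanSpace ℝ (Fin n))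
    (hd : ∀ᶠ y in nhds x₀, DifferentiableAt ℝ f y)
    (hd2 : DifferentiableAt ℝ (fun y => fderiv ℝ f y v) x₀)
    (hmax : IsLocalMax f x₀) :
    fderiv ℝ (fun y => fderiv ℝ f y v) x₀ v ≤ 0 := by
  by_contra hA'
  push_neg at hA'
  set A := fderiv ℝ (fun y => fderiv ℝ f y v) x₀ v with hAdef
  set L : ℝ → EuclideanSpace ℝ (Fin n) := fun τ => x₀ + τ • v with hL
  have hL0 : L 0 = x₀ := by simp [hL]
  have hLd : ∀ τ : ℝ, HasDerivAt L v τ := by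
    intro τ
    simpa only [id_eq, one_smul] using ((hasDerivAt_id τ).smul_const v).const_add x₀
  have hLcont : Continuous L := by continuity
  have hLtendsto : Tendsto L (nhds 0) (nhds x₀) := by
    rw [← hL0]; exact hLcont.continuousAt
  set h : ℝ → ℝ := fun τ => fderiv ℝ f (L τ) v with hh
  set g : ℝ → ℝ := fun τ => f (L τ) with hg
  -- h has derivative A at 0
  have hH : HasDerivAt h A 0 := by
    have h1 : HasFDerivAt (fun y => (fderiv ℝ f y) v) (fderiv ℝ (fun y => (fderiv ℝ f y) v) x₀) (L 0) := by
      rw [hL0]; exact hd2.hasFDerivAt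
    have := h1.comp_hasDerivAt 0 (hLd 0)
    exact this
  have h0 : h 0 = 0 := by
    simp [hh, hL0, hmax.fderiv_eq_zero]
  -- g has derivative h τ at τ whenever f is differentiable at L τ
  have hgd : ∀ᶠ τ in nhds 0, HasDerivAt g (h τ) τ := by
    filter_upwards [hLtendsto.eventually hd] with τ hdt
    exact hdt.hasFDerivAt.comp_hasDerivAt τ (hLd τ)
  -- g τ ≤ g 0 near 0
  have hgmax : ∀ᶠ τ in nhds 0, g τ ≤ g 0 := by
    have := hLtendsto.eventually hmax
    simpa [hg, hL0] using this
  -- h positive on small right interval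
  have hslope : Tendsto (slope h 0) (nhdsWithin 0 {(0:ℝ)}ᶜ) (nhds A) :=
    hasDerivAt_iff_tendsto_slope.1 hH
  have hpos : ∀ᶠ τ in nhdsWithin 0 {(0:ℝ)}ᶜ, 0 < slope h 0 τ :=
    hslope.eventually (eventually_gt_nhds hA')
  have hall : ∀ᶠ τ in nhds 0, HasDerivAt g (h τ) τ ∧ g τ ≤ g 0 := hgd.and hgmax
  rw [Metric.eventually_nhds_iff] at hall
  obtain ⟨ε₁, hε₁, H₁⟩ := hall
  rw [eventually_nhdsWithin_iff, Metric.eventually_nhds_iff] at hpos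
  obtain ⟨ε₂, hε₂, H₂⟩ := hpos
  set ε := min ε₁ ε₂ / 2 with hεdef
  have hε0 : 0 < ε := by positivity
  have hεlt1 : ε < ε₁ := by
    calc ε < min ε₁ ε₂ := by rw [hεdef]; exact half_lt_self (by positivity)
    _ ≤ ε₁ := min_le_left _ _
  have hεlt2 : ε < ε₂ := by
    calc ε < min ε₁ ε₂ := by rw [hεdef]; exact half_lt_self (by positivity)
    _ ≤ ε₂ := min_le_right _ _
  have hdist : ∀ τ : ℝ, τ ∈ Icc (0:ℝ) ε → dist τ 0 < ε₁ ∧ dist τ 0 < ε₂ := by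
    intro τ hτ
    have : dist τ 0 ≤ ε := by
      rw [Real.dist_eq, sub_zero, abs_of_nonneg hτ.1]; exact hτ.2
    exact ⟨lt_of_le_of_lt this hεlt1, lt_of_le_of_lt this hεlt2⟩
  have hmono : StrictMonoOn g (Icc 0 ε) := by
    apply strictMonoOn_of_deriv_pos (convex_Icc 0 ε)
    · intro τ hτ
      exact ((H₁ (hdist τ hτ).1).1).continuousAt.continuousWithinAt
    · intro τ hτ
      rw [interior_Icc] at hτ
      have hτmem : τ ∈ Icc (0:ℝ) ε := ⟨hτ.1.le, hτ.2.le⟩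
      have hder := (H₁ (hdist τ hτmem).1).1
      rw [hder.deriv]
      have hsl := H₂ (hdist τ hτmem).2 (by simpa using hτ.1.ne')
      have hval : h τ = slope h 0 τ * τ := by
        rw [slope_def_field, h0, sub_zero, sub_zero, div_mul_cancel₀ _ hτ.1.ne']
      rw [hval]
      exact mul_pos hsl hτ.1
  have hlt : g 0 < g ε := hmono (left_mem_Icc.2 hε0.le) (right_mem_Icc.2 hε0.le) hε0
  have hle : g ε ≤ g 0 := (H₁ (by rw [Real.dist_eq, sub_zero, abs_of_nonneg hε0.le]; exact hεlt1)).2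
  exact absurd hle (not_le.2 hlt)

lemma max_principle (D : Set (EuclideanSpace ℝ (Fin n))) (hDo : IsOpen D)
    (hDb : Bornology.IsBounded D)
    (f : EuclideanSpace ℝ (Fin n) → ℝ) (hfc : ContinuousOn f (closure D))
    (hdiff : ∀ x ∈ D, (∀ᶠ y in nhds x, DifferentiableAt ℝ f y) ∧
      ∀ v, DifferentiableAt ℝ (fun y => fderiv ℝ f y v) x)
    (hlap : ∀ x ∈ D, 0 < laplacian f x)
    (hfront : ∀ x ∈ frontier D, f x ≤ 0) :
    ∀ x ∈ D, f x ≤ 0 := by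
  intro x hx
  have hcl : IsCompact (closure D) := hDb.isCompact_closure
  have hne : (closure D).Nonempty := ⟨x, subset_closure hx⟩
  obtain ⟨y, hy, hymax⟩ := hcl.exists_isMaxOn hne hfc
  by_cases hyD : y ∈ D
  · exfalso
    have hloc : IsLocalMax f y :=
      hymax.isLocalMax (mem_of_superset (hDo.mem_nhds hyD) subset_closure)
    have hnp : laplacian f y ≤ 0 := by
      apply Finset.sum_nonpos
      intro i _
      exact second_deriv_test f y _ (hdiff y hyD).1 ((hdiff y hyD).2 _) hloc
    linarith [hlap y hyD]
  · have hyf : y ∈ frontier D := by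
      rw [frontier, hDo.interior_eq]
      exact ⟨hy, hyD⟩
    exact le_trans (hymax (subset_closure hx)) (hfront y hyf)


lemma key_le (n : ℕ) (hn : 1 ≤ n)
    (Ω : Set (EuclideanSpace ℝ (Fin n)))
    (hΩopen : IsOpen Ω) (hΩne : Ω.Nonempty)
    (p e : EuclideanSpace ℝ (Fin n)) (θ : ℝ)
    (he : ‖e‖ = 1) (hθ₀ : 0 < θ) (hθ₁ : θ ≤ Real.pi / 2)
    (hcone : ∀ x ∈ closure Ω, ⟪x - p, e⟫ < ‖x - p‖ * Real.cos θ)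
    (u : EuclideanSpace ℝ (Fin n) → ℝ)
    (hbnd : ∃ C : ℝ, ∀ x ∈ closure Ω, |u x| ≤ C)
    (hcont : ContinuousOn u (closure Ω))
    (hC2 : ContDiffOn ℝ 2 u Ω)
    (hlap : ∀ x ∈ Ω, laplacian u x = 0)
    (hfront : ∀ x ∈ frontier Ω, u x = 0) :
    ∀ z ∈ Ω, u z ≤ 0 := by
  obtain ⟨C, hC⟩ := hbnd
  set s : ℝ := sSup (u '' Ω) with hsdef
  clear_value s
  have hbdd : BddAbove (u '' Ω) := by
    refine ⟨C, fun y hy => ?_⟩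
    obtain ⟨x, hx, rfl⟩ := hy
    exact (abs_le.1 (hC x (subset_closure hx))).2
  have hle_s : ∀ x ∈ Ω, u x ≤ s := by
    intro x hx
    rw [hsdef]
    exact le_csSup hbdd (mem_image_of_mem u hx)
  rcases le_or_gt s 0 with hs | hs
  · exact fun z hz => le_trans (hle_s z hz) hs
  exfalso
  -- constants
  set c : ℝ := Real.cos θ with hcdef
  clear_value c
  have hπ := Real.pi_pos
  have hc0 : 0 ≤ c := by
    rw [hcdef]
    exact Real.cos_nonneg_of_mem_Icc ⟨by linarith, hθ₁⟩
  have hc1 : c < 1 := by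
    have h := Real.strictAntiOn_cos (show (0:ℝ) ∈ Icc 0 Real.pi by constructor <;> linarith)
      (show θ ∈ Icc 0 Real.pi by constructor <;> linarith) hθ₀
    rw [Real.cos_zero] at h
    rw [hcdef]
    exact h
  set δ : ℝ := (1 - c)/4 with hδdef
  clear_value δ
  have hδ : 0 < δ := by simp only [hδdef]; linarith
  have hδ4 : δ ≤ 1/4 := by simp only [hδdef]; linarith
  set c₀ : ℝ := ((2*δ/3)^2)^n - ((δ/8)^2)^n with hc₀def
  clear_value c₀
  have hc₀ : 0 < c₀ := by
    have h1 : (δ/8)^2 < (2*δ/3)^2 := by nlinarith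
    have := pow_lt_pow_left₀ h1 (by positivity) (by omega : n ≠ 0)
    simp only [hc₀def]; linarith
  -- the main estimate
  have hmain : ∀ z ∈ Ω, u z ≤ (1 - c₀) * s := by
    intro z hz
    have hzcl := subset_closure hz
    have hr0 : z ≠ p := by
      intro h
      have := hcone z hzcl
      rw [h] at this
      simp at this
    set r : ℝ := ‖z - p‖ with hrdef
    clear_value r
    have hr : 0 < r := by
      simp only [hrdef]
      exact norm_pos_iff.2 (sub_ne_zero.2 hr0)
    set q : EuclideanSpace ℝ (Fin n) := p + (r/2) • e with hqdef
    clear_value q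
    -- every point of the closure is far from q
    have hq_far : ∀ x ∈ closure Ω, δ * r < ‖x - q‖ := by
      intro x hx
      by_contra hcon
      push_neg at hcon
      have hxpe : ⟪x - p, e⟫ = ⟪x - q, e⟫ + r/2 := by
        have hxp : x - p = (x - q) + (r/2) • e := by
          simp only [hqdef]; abel
        rw [hxp, inner_add_left, real_inner_smul_left, real_inner_self_eq_norm_sq, he]
        ring
      have hinner_bd : |⟪x - q, e⟫| ≤ ‖x - q‖ := by
        have := abs_real_inner_le_norm (x - q) e
        rwa [he, mul_one] at this
      have hnorm_bd : ‖x - p‖ ≤ ‖x - q‖ + r/2 := by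
        have hxp : x - p = (x - q) + (r/2) • e := by
          simp only [hqdef]; abel
        rw [hxp]
        calc ‖(x - q) + (r/2) • e‖ ≤ ‖x - q‖ + ‖(r/2) • e‖ := norm_add_le _ _
        _ = ‖x - q‖ + r/2 := by rw [norm_smul, he]; simp [abs_of_pos hr]
      have hlow : r/2 - δ*r ≤ ⟪x - p, e⟫ := by
        rw [hxpe]
        have : -(δ*r) ≤ ⟪x - q, e⟫ := by
          have h1 := (abs_le.1 hinner_bd).1
          linarith
        linarith
      have hup : ‖x - p‖ * c ≤ (δ*r + r/2) * c := by
        apply mul_le_mul_of_nonneg_right _ hc0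
        linarith
      have hgeom : (δ*r + r/2) * c ≤ r/2 - δ*r := by
        have h48 : 0 ≤ (1 - c)*(1 - c)/8 * r := by
          have hcle : 0 ≤ 1 - c := by linarith
          positivity
        simp only [hδdef]
        nlinarith
      have := hcone x hx
      linarith
    have hzq_ne : z ≠ q := by
      intro h
      have := hq_far z hzcl
      rw [h] at this
      simp at this
      nlinarith
    have hzq_ub : ‖z - q‖ ≤ 3/2 * r := by
      have hzq : z - q = (z - p) - (r/2) • e := by
        simp only [hqdef]; abel
      rw [hzq]
      calc ‖(z - p) - (r/2) • e‖ ≤ ‖z - p‖ + ‖(r/2) • e‖ := norm_sub_le _ _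
      _ = r + r/2 := by rw [norm_smul, he]; simp [abs_of_pos hr, hrdef]
      _ ≤ 3/2 * r := by linarith
    -- barrier constants
    set b : ℝ := (((8*r)^2))^(-(n:ℤ)) with hbdef
    clear_value b
    set cden : ℝ := (((δ*r)^2))^(-(n:ℤ)) - b with hcdendef
    clear_value cden
    have hb_pos : 0 < b := by
      rw [hbdef]
      exact zpow_neg_pos' (by positivity)
    have hcden : 0 < cden := by
      have h1 : ((8*r)^2)^(-(n:ℤ)) < ((δ*r)^2)^(-(n:ℤ)) := by
        rw [zpow_neg, zpow_neg, zpow_natCast, zpow_natCast]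
        apply inv_strictAnti₀ (by positivity)
        apply pow_lt_pow_left₀ _ (by positivity) (by omega)
        have hδ2 : δ^2 ≤ 1/16 := by nlinarith
        nlinarith [mul_pos hr hr, sq_nonneg r, hδ2]
      simp only [hcdendef, hbdef]
      linarith
    set κ : ℝ := s / cden with hκdef
    clear_value κ
    have hκ : 0 < κ := by rw [hκdef]; exact div_pos hs hcden
    set D : Set (EuclideanSpace ℝ (Fin n)) := Ω ∩ Metric.ball z (10*r) with hDdef
    set f : EuclideanSpace ℝ (Fin n) → ℝ :=
      fun y => u y + κ * pf q y - (κ * b + s) with hfdef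
    have hDopen : IsOpen D := hΩopen.inter Metric.isOpen_ball
    have hDbdd : Bornology.IsBounded D :=
      (Metric.isBounded_ball).subset inter_subset_right
    have hDcl : closure D ⊆ closure Ω := closure_mono inter_subset_left
    have hne_q : ∀ x ∈ closure Ω, x ≠ q := by
      intro x hx h
      have := hq_far x hx
      rw [h] at this
      simp at this
      nlinarith
    -- pf is between explicit bounds on relevant sets
    have hpf_le : ∀ x ∈ closure Ω, pf q x ≤ ((δ*r)^2)^(-(n:ℤ)) := by
      intro x hx
      have h1 := hq_far x hx
      unfold pf
      rw [rf_eq_norm_sq]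
      apply zpow_neg_le' (by positivity)
      apply pow_le_pow_left₀ (by positivity) h1.le
    -- continuity of f on closure D
    have hfc : ContinuousOn f (closure D) := by
      apply ContinuousOn.sub _ continuousOn_const
      apply ContinuousOn.add (hcont.mono hDcl)
      apply ContinuousOn.mul continuousOn_const
      intro x hx
      exact (pf_differentiableAt q (hne_q x (hDcl hx))).continuousAt.continuousWithinAt
    -- differentiability package
    have hudiff : ∀ x ∈ Ω, DifferentiableAt ℝ u x := fun x hx =>
      ((hC2 x hx).contDiffAt (hΩopen.mem_nhds hx)).differentiableAt (by norm_num)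
    have hfd1 : ContDiffOn ℝ 1 (fderiv ℝ u) Ω := hC2.fderiv_of_isOpen hΩopen (by norm_num)
    have hpkg : ∀ x ∈ D, ((∀ᶠ y in nhds x, DifferentiableAt ℝ f y) ∧
        ∀ v, DifferentiableAt ℝ (fun y => fderiv ℝ f y v) x) ∧ 0 < laplacian f x := by
      intro x hx
      have hxΩ : x ∈ Ω := hx.1
      have hxq : x ≠ q := hne_q x (subset_closure hxΩ)
      have hev : ∀ᶠ y in nhds x, y ∈ Ω ∧ y ≠ q := by
        have hopen : IsOpen (Ω ∩ {t | t ≠ q}) := hΩopen.inter isOpen_ne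
        filter_upwards [hopen.mem_nhds ⟨hxΩ, hxq⟩] with y hy
        exact hy
      have hdif : ∀ᶠ y in nhds x, DifferentiableAt ℝ f y := by
        filter_upwards [hev] with y hy
        have h1 := hudiff y hy.1
        have h2 := (pf_differentiableAt q hy.2).const_mul κ
        exact (h1.add h2).sub_const _
      have hfderiv_eq : ∀ᶠ y in nhds x,
          fderiv ℝ f y = fderiv ℝ u y + κ • fderiv ℝ (pf q) y := by
        filter_upwards [hev] with y hy
        have h1 := hudiff y hy.1
        have h2 := pf_differentiableAt q hy.2
        have hstep : fderiv ℝ f y = fderiv ℝ (fun t => u t + κ * pf q t) y := by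
          rw [hfdef]
          exact fderiv_sub_const _
        rw [hstep, fderiv_fun_add h1 (h2.const_mul κ), fderiv_const_mul h2]
      have hsec : ∀ v, DifferentiableAt ℝ (fun y => fderiv ℝ f y v) x ∧
          fderiv ℝ (fun y => fderiv ℝ f y v) x v
            = fderiv ℝ (fun y => fderiv ℝ u y v) x v
              + κ * fderiv ℝ (fun y => fderiv ℝ (pf q) y v) x v := by
        intro v
        have hev2 : (fun y => fderiv ℝ f y v) =ᶠ[nhds x]
            (fun y => fderiv ℝ u y v + κ * fderiv ℝ (pf q) y v) := by
          filter_upwards [hfderiv_eq] with y hy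
          rw [hy]
          simp
        have hu2 : DifferentiableAt ℝ (fun y => fderiv ℝ u y v) x := by
          have h3 := ((hfd1 x hxΩ).contDiffAt (hΩopen.mem_nhds hxΩ)).differentiableAt one_ne_zero
          exact h3.clm_apply (differentiableAt_const v)
        have hp2 := (pf_second q hxq v).1
        constructor
        · rw [hev2.differentiableAt_iff]
          exact hu2.add (hp2.const_mul κ)
        · rw [hev2.fderiv_eq, fderiv_fun_add hu2 (hp2.const_mul κ), fderiv_const_mul hp2]
          simp
      refine ⟨⟨hdif, fun v => (hsec v).1⟩, ?_⟩
      have hlapf : laplacian f x = laplacian u x + κ * laplacian (pf q) x := by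
        unfold laplacian
        rw [Finset.mul_sum, ← Finset.sum_add_distrib]
        exact Finset.sum_congr rfl fun i _ => (hsec _).2
      rw [hlapf, hlap x hxΩ, zero_add]
      exact mul_pos hκ (pf_lap_pos q hn hxq)
    -- κ · cden = s
    have hκc : κ * cden = s := by
      rw [hκdef]
      exact div_mul_cancel₀ s hcden.ne'
    -- boundary estimate
    have hfront' : ∀ x ∈ frontier D, f x ≤ 0 := by
      intro x hxf
      have hxcl : x ∈ closure D := frontier_subset_closure hxf
      have hxclΩ : x ∈ closure Ω := hDcl hxcl
      have hxnD : x ∉ D := by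
        have hfr : frontier D = closure D \ D := by
          rw [frontier, hDopen.interior_eq]
        rw [hfr] at hxf
        exact hxf.2
      have hpfx := hpf_le x hxclΩ
      have hfx : f x = u x + κ * pf q x - (κ * b + s) := by rw [hfdef]
      by_cases hxΩf : x ∈ frontier Ω
      · have hux : u x = 0 := hfront x hxΩf
        have hmul : κ * pf q x ≤ κ * ((δ*r)^2)^(-(n:ℤ)) :=
          mul_le_mul_of_nonneg_left hpfx hκ.le
        have hκc2 : κ * ((δ*r)^2)^(-(n:ℤ)) - κ * b = s := by
          have : κ * (((δ*r)^2)^(-(n:ℤ)) - b) = s := by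
            rw [← hcdendef]
            exact hκc
          linarith [this, mul_sub κ (((δ*r)^2)^(-(n:ℤ))) b]
        linarith
      · have hxΩ : x ∈ Ω := by
          have h1 := hxclΩ
          rw [closure_eq_interior_union_frontier, hΩopen.interior_eq] at h1
          rcases h1 with h1 | h1
          · exact h1
          · exact absurd h1 hxΩf
        have hxball : x ∉ Metric.ball z (10*r) := fun h => hxnD ⟨hxΩ, h⟩
        have hdist : 10*r ≤ ‖x - z‖ := by
          rw [Metric.mem_ball, dist_eq_norm] at hxball
          push_neg at hxball
          exact hxball
        have hxq8 : 8*r ≤ ‖x - q‖ := by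
          have h1 : ‖x - z‖ ≤ ‖x - q‖ + ‖z - q‖ := by
            have h2 : x - z = (x - q) - (z - q) := by abel
            rw [h2]
            exact norm_sub_le _ _
          linarith
        have hpfb : pf q x ≤ b := by
          rw [hbdef]
          unfold pf
          rw [rf_eq_norm_sq]
          apply zpow_neg_le' (by positivity)
          exact pow_le_pow_left₀ (by positivity) hxq8 2
        have hux := hle_s x hxΩ
        nlinarith [mul_le_mul_of_nonneg_left hpfb hκ.le]
    -- apply the maximum principle
    have hzD : z ∈ D := ⟨hz, Metric.mem_ball_self (by positivity)⟩
    have hfz_le : f z ≤ 0 :=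
      max_principle D hDopen hDbdd f hfc (fun x hx => (hpkg x hx).1)
        (fun x hx => (hpkg x hx).2) hfront' z hzD
    have hfz : f z = u z + κ * pf q z - (κ * b + s) := by rw [hfdef]
    -- lower bound for pf q z
    have hzq_pos : (0:ℝ) < ‖z - q‖ := norm_pos_iff.2 (sub_ne_zero.2 hzq_ne)
    have hpfz : ((3/2*r)^2)^(-(n:ℤ)) ≤ pf q z := by
      unfold pf
      rw [rf_eq_norm_sq]
      apply zpow_neg_le' (by positivity)
      exact pow_le_pow_left₀ (by positivity) hzq_ub 2
    -- algebraic identities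
    have e1 : ((2*δ/3)^2)^n * ((δ*r)^2)^(-(n:ℤ)) = ((3/2*r)^2)^(-(n:ℤ)) := by
      rw [zpow_neg, zpow_neg, zpow_natCast, zpow_natCast]
      rw [mul_inv_eq_iff_eq_mul₀ (by positivity), inv_mul_eq_div, eq_div_iff (by positivity),
        ← mul_pow, ← mul_pow]
      congr 1
      ring
    have e2 : ((δ/8)^2)^n * ((δ*r)^2)^(-(n:ℤ)) = ((8*r)^2)^(-(n:ℤ)) := by
      rw [zpow_neg, zpow_neg, zpow_natCast, zpow_natCast]
      rw [mul_inv_eq_iff_eq_mul₀ (by positivity), inv_mul_eq_div, eq_div_iff (by positivity),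
        ← mul_pow, ← mul_pow]
      congr 1
      ring
    -- c₀ * cden ≤ pf q z - b
    have hX_pos : (0:ℝ) < ((δ*r)^2)^(-(n:ℤ)) := zpow_neg_pos' (by positivity)
    have h3 : c₀ * ((δ*r)^2)^(-(n:ℤ)) = ((3/2*r)^2)^(-(n:ℤ)) - b := by
      rw [hc₀def, hbdef, sub_mul, e1, e2]
    have halg : c₀ * cden ≤ pf q z - b := by
      have h2 : c₀ * cden ≤ c₀ * ((δ*r)^2)^(-(n:ℤ)) := by
        apply mul_le_mul_of_nonneg_left _ hc₀.le
        rw [hcdendef]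
        linarith
      rw [h3] at h2
      linarith
    have h4 : κ * (c₀ * cden) ≤ κ * (pf q z - b) := mul_le_mul_of_nonneg_left halg hκ.le
    have h5 : κ * (c₀ * cden) = c₀ * s := by rw [← hκc]; ring
    have hms : κ * (pf q z - b) = κ * pf q z - κ * b := by ring
    linarith
  -- conclude
  have : s ≤ (1 - c₀) * s := by
    rw [hsdef]
    apply csSup_le (Set.Nonempty.image u hΩne)
    rintro y ⟨x, hx, rfl⟩
    rw [← hsdef]
    exact hmain x hx
  nlinarith

lemma laplacian_neg (u : EuclideanSpace ℝ (Fin n) → ℝ) (x : EuclideanSpace ℝ (Fin n)) :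
    laplacian (fun y => -u y) x = -laplacian u x := by
  unfold laplacian
  rw [← Finset.sum_neg_distrib]
  refine Finset.sum_congr rfl fun i _ => ?_
  have h1 : (fun y => fderiv ℝ (fun t => -u t) y (EuclideanSpace.single i 1))
      = fun y => -(fderiv ℝ u y (EuclideanSpace.single i 1)) := by
    funext y
    rw [fderiv_fun_neg]
    simp
  rw [h1, fderiv_fun_neg]
  simp

/-- A domain contained in the complement of a non-degenerate solid cone is
Dirichlet parabolic. -/
theorem dirichlet_parabolic_complement_of_cone
    (n : ℕ) (hn : 2 ≤ n)
    (Ω : Set (EuclideanSpace ℝ (Fin n)))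
    (hΩopen : IsOpen Ω) (hΩconn : IsConnected Ω)
    (p e : EuclideanSpace ℝ (Fin n)) (θ : ℝ)
    (he : ‖e‖ = 1) (hθ₀ : 0 < θ) (hθ₁ : θ ≤ Real.pi / 2)
    -- the closure of Ω is contained in the complement of the cone
    -- C = {x : ⟨x − p, e⟩ ≥ ‖x − p‖·cos θ}
    (hcone : ∀ x ∈ closure Ω, ⟪x - p, e⟫ < ‖x - p‖ * Real.cos θ) :
    ∀ u : EuclideanSpace ℝ (Fin n) → ℝ,
      (∃ C : ℝ, ∀ x ∈ closure Ω, |u x| ≤ C) →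
      ContinuousOn u (closure Ω) →
      ContDiffOn ℝ 2 u Ω →
      (∀ x ∈ Ω, laplacian u x = 0) →
      (∀ x ∈ frontier Ω, u x = 0) →
      ∀ x ∈ Ω, u x = 0 := by
  intro u hbnd hcont hC2 hlapu hfrontu x hx
  have hn1 : 1 ≤ n := le_trans one_le_two hn
  have h1 := key_le n hn1 Ω hΩopen hΩconn.nonempty p e θ he hθ₀ hθ₁ hcone u
    hbnd hcont hC2 hlapu hfrontu x hx
  obtain ⟨C, hC⟩ := hbnd
  have h2 := key_le n hn1 Ω hΩopen hΩconn.nonempty p e θ he hθ₀ hθ₁ hcone (fun y => -u y)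
    ⟨C, fun t ht => by simpa using hC t ht⟩ hcont.neg hC2.neg
    (fun t ht => by rw [laplacian_neg, hlapu t ht]; ring)
    (fun t ht => by beta_reduce; rw [hfrontu t ht]; ring) x hx
  simp only [neg_nonpos] at h2
  linarith
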